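/- Let A, B > 0 with A, B sufficiently small, and let q(x) := (A/B)x + (A/(16B²))x². Define q̃ := tan ∘ q ∘ arctan. Then there exists δ > 0 such that whenever 0 < A, B < δ, for all t ∈ [−4B, 2B] one has q̃(t) ≤ (A/B)t + (A/(8B²))t². -/

import Mathlib

open Real

lemma myTan_le_cubic {x : ℝ} (h0 : 0 ≤ x) (h1 : x ≤ 1/2) : tan x ≤ x + x^3 := by
  have hcos : (1 : ℝ)/2 < cos x := by
    have := Real.one_sub_sq_div_two_le_cos (x := x)
    nlinarith
  have hsin : sin x ≤ x := Real.sin_le h0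
  rw [Real.tan_eq_sin_div_cos, div_le_iff₀ (by linarith)]
  have hc2 : 1 - x^2/2 ≤ cos x := Real.one_sub_sq_div_two_le_cos
  nlinarith [sq_nonneg x, mul_nonneg h0 (sq_nonneg x)]

lemma myArctan_ge {r : ℝ} (h0 : 0 ≤ r) (h1 : r ≤ 1/2) : r - r^3 ≤ arctan r := by
  set s := r - r^3 with hs
  have hr2 : r^2 ≤ 1 := by nlinarith
  have hs0 : 0 ≤ s := by rw [hs]; nlinarith [mul_nonneg h0 (by nlinarith : (0:ℝ) ≤ 1 - r^2)]
  have hsr : s ≤ r := by rw [hs]; nlinarith [pow_nonneg h0 3]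
  have hspi : s < π/2 := by nlinarith [Real.pi_gt_three]
  have htan : tan s ≤ r := by
    have := myTan_le_cubic hs0 (by linarith)
    nlinarith [pow_le_pow_left₀ hs0 hsr 3]
  calc s = arctan (tan s) := (Real.arctan_tan (by nlinarith [Real.pi_gt_three]) hspi).symm
    _ ≤ arctan r := Real.arctan_strictMono.monotone htan

lemma myTan_le_self {x : ℝ} (h0 : x ≤ 0) (h1 : -(π/2) < x) : tan x ≤ x := by
  have := Real.le_tan (x := -x) (by linarith) (by linarith)
  rw [Real.tan_neg] at this
  linarith

lemma myArctan_le_self {t : ℝ} (h : 0 ≤ t) : arctan t ≤ t := by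
  have h0 : 0 ≤ arctan t := by
    have := Real.arctan_strictMono.monotone h
    simpa [Real.arctan_zero] using this
  have := Real.le_tan h0 (Real.arctan_lt_pi_div_two t)
  rwa [Real.tan_arctan] at this

set_option maxHeartbeats 1000000

/-- There exists `δ > 0` such that whenever `0 < A, B < δ`, the image
`q̃ = tan ∘ q ∘ arctan` of the quadratic `q(x) = (A/B) x + (A/(16B²)) x²` under the
rotated Penrose chart satisfies `q̃(t) ≤ (A/B) t + (A/(8B²)) t²` for all `t ∈ [-4B, 2B]`. -/
theorem stmt16 :
    ∃ δ : ℝ, 0 < δ ∧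
      ∀ A B : ℝ, 0 < A → A < δ → 0 < B → B < δ →
        ∀ t ∈ Set.Icc (-4 * B) (2 * B),
          Real.tan ((A / B) * Real.arctan t + (A / (16 * B ^ 2)) * (Real.arctan t) ^ 2) ≤
            (A / B) * t + (A / (8 * B ^ 2)) * t ^ 2 := by
  refine ⟨1/100, by norm_num, ?_⟩
  intro A B hA hAd hB hBd t ht
  obtain ⟨ht1, ht2⟩ := ht
  have hQpos : (0:ℝ) < A / (16 * B^2) := by positivity
  have hPpos : (0:ℝ) < A / B := div_pos hA hB
  rw [show A / (8 * B ^ 2) = 2 * (A / (16 * B ^ 2)) by ring]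
  set u := Real.arctan t with hu
  clear_value u
  rcases le_or_gt 0 t with hpos | hneg
  · -- t ≥ 0
    have hu0 : 0 ≤ u := by
      rw [hu, ← Real.arctan_zero]; exact Real.arctan_strictMono.monotone hpos
    have hut : u ≤ t := by rw [hu]; exact myArctan_le_self hpos
    set x := A / B * u + A / (16 * B^2) * u^2 with hx
    clear_value x
    have hx0 : 0 ≤ x := by rw [hx]; positivity
    have hxle : x ≤ A / B * t + A / (16 * B^2) * t^2 := by
      have h1 := mul_le_mul_of_nonneg_left hut hPpos.le
      have h2 := mul_le_mul_of_nonneg_left (pow_le_pow_left₀ hu0 hut 2) hQpos.le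
      rw [hx]; linarith
    have hABt : A / B * t ≤ 2 * A := by
      rw [div_mul_eq_mul_div, div_le_iff₀ hB]; nlinarith
    have hQt : A / (16 * B^2) * t^2 ≤ A / 4 := by
      rw [div_mul_eq_mul_div, div_le_div_iff₀ (by positivity) (by norm_num)]
      nlinarith [mul_le_mul_of_nonneg_left (show t^2 ≤ 4*B^2 by nlinarith) hA.le]
    have hxhalf : x ≤ 1/2 := by linarith
    have htan := myTan_le_cubic hx0 hxhalf
    have hQt2 : A / (16 * B^2) * t^2 ≤ 1/8 * (A / B * t) := by
      rw [div_mul_eq_mul_div, show (1:ℝ)/8 * (A / B * t) = A * t / (8 * B) by ring,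
        div_le_div_iff₀ (by positivity) (by positivity)]
      nlinarith [sq_nonneg t, mul_nonneg (mul_nonneg hA.le hpos) hB.le]
    have hx98 : x ≤ 9/8 * (A / B * t) := by linarith
    have hcube : x^3 ≤ (9/8 * (A / B * t))^3 := pow_le_pow_left₀ hx0 hx98 3
    have hkey : (9/8 * (A / B * t))^3 ≤ A / (16 * B^2) * t^2 := by
      rw [show (9/8 * (A / B * t))^3 = 729 * A^3 * t^3 / (512 * B^3) by field_simp; ring,
        show A / (16 * B^2) * t^2 = A * t^2 / (16 * B^2) by ring,
        div_le_div_iff₀ (by positivity) (by positivity)]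
      have e1 : t^3 ≤ t^2 * (2*B) := by nlinarith [sq_nonneg t]
      have e2 : A^3 ≤ A / 10000 := by
        nlinarith [mul_nonneg (mul_nonneg hA.le (by linarith : (0:ℝ) ≤ 1/100 - A))
          (by linarith : (0:ℝ) ≤ 1/100 + A)]
      have f1 := mul_le_mul_of_nonneg_left e1 (show (0:ℝ) ≤ A^3 * B^2 by positivity)
      have f2 := mul_le_mul_of_nonneg_left e2 (show (0:ℝ) ≤ t^2 * B^3 by positivity)
      nlinarith [f1, f2, mul_nonneg (mul_nonneg hA.le (sq_nonneg t)) (pow_nonneg hB.le 3)]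
    have : x + x^3 ≤ A / B * t + 2 * (A / (16 * B^2) * t^2) := by linarith
    linarith
  · -- t < 0
    have hu0 : u ≤ 0 := by
      rw [hu, ← Real.arctan_zero]; exact Real.arctan_strictMono.monotone hneg.le
    have htu : t ≤ u := by
      have h := myArctan_le_self (t := -t) (by linarith)
      rw [Real.arctan_neg] at h
      rw [hu]; linarith
    have hu4 : -4 * B ≤ u := le_trans ht1 htu
    set x := A / B * u + A / (16 * B^2) * u^2 with hx
    clear_value x
    have hPu : A / B * u ≤ 0 := mul_nonpos_of_nonneg_of_nonpos hPpos.le hu0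
    have hxle0 : x ≤ 0 := by
      have hu2 : u^2 ≤ (-4*B) * u := by nlinarith
      have h1 := mul_le_mul_of_nonneg_left hu2 hQpos.le
      have heq : A / (16 * B^2) * ((-4*B) * u) = -(1/4) * (A / B * u) := by
        field_simp; ring
      rw [hx]; rw [heq] at h1; linarith
    have hxgt : -(π/2) < x := by
      have h1 := mul_le_mul_of_nonneg_left hu4 hPpos.le
      have h2 : A / B * (-4 * B) = -4 * A := by field_simp
      have h3 : 0 ≤ A / (16 * B^2) * u^2 := by positivity
      have hpi := Real.pi_gt_three
      rw [hx]; rw [h2] at h1; linarith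
    have htan := myTan_le_self hxle0 hxgt
    have harc : u ≤ t - t^3 := by
      have h := myArctan_ge (r := -t) (by linarith) (by linarith)
      rw [Real.arctan_neg, ← hu] at h
      nlinarith [h]
    have hu2t : u^2 ≤ t^2 := by nlinarith
    have h1 := mul_le_mul_of_nonneg_left (show u - t ≤ -t^3 by linarith) hPpos.le
    have h2 : A / B * (-t^3) ≤ 4 * A * t^2 := by
      rw [div_mul_eq_mul_div, div_le_iff₀ hB]
      nlinarith [mul_nonneg (mul_nonneg (show (0:ℝ) ≤ 4*B + t by linarith) (sq_nonneg t)) hA.le]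
    have h3 : 4 * A * t^2 ≤ A / (16 * B^2) * t^2 := by
      rw [div_mul_eq_mul_div, le_div_iff₀ (by positivity)]
      nlinarith [mul_nonneg (mul_nonneg hA.le (sq_nonneg t))
        (show (0:ℝ) ≤ 1 - 64*B^2 by nlinarith)]
    have h4 := mul_le_mul_of_nonneg_left hu2t hQpos.le
    nlinarith [htan, h1, h2, h3, h4]
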